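/- Let X, Y, Z be Banach spaces, x₀ ∈ X, y₀ ∈ Y, ρ, η > 0, and let Φ : B(x₀,ρ) × B(y₀,η) → Z be continuous in x and continuously (Fréchet) differentiable in y, with Φ(x₀,y₀) = 0. Suppose L₀ := D_yΦ(x₀,y₀) has a bounded inverse, and that: (i) ‖L₀ − D_yΦ(x,y)‖ ≤ (1/3)‖L₀⁻¹‖⁻¹ for all x ∈ B(x₀,ρ), y ∈ B(y₀,η); (ii) ‖Φ(x,y₀)‖ ≤ (η/3)‖L₀⁻¹‖⁻¹ for all x ∈ B(x₀,ρ). Then there exists a continuous map y : B(x₀,ρ) → B(y₀,η) such that for every x ∈ B(x₀,ρ), y(x) is the unique solution in B(y₀,η) of the equation Φ(x, y(x)) = 0. -/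

import Mathlib

open Metric

/-- **Implicit Function Theorem variant** (Lemma 2.4 of the paper).
`X`, `Y`, `Z` are Banach spaces, `Φ : X → Y → Z` is continuous in `x` and continuously
Fréchet differentiable in `y` (with derivative `DΦ x y`), `Φ x₀ y₀ = 0`, and
`L₀ := DΦ x₀ y₀` has a bounded inverse `L₀inv`.  Under the smallness conditions (i) and (ii),
there is a continuous map `yf : B(x₀,ρ) → B(y₀,η)` such that for each `x ∈ B(x₀,ρ)`,
`yf x` is the unique solution of `Φ x y = 0` in `B(y₀,η)`. -/
theorem implicit_function_theorem_variant
    {X Y Z : Type*}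
    [NormedAddCommGroup X] [NormedSpace ℝ X] [CompleteSpace X]
    [NormedAddCommGroup Y] [NormedSpace ℝ Y] [CompleteSpace Y]
    [NormedAddCommGroup Z] [NormedSpace ℝ Z] [CompleteSpace Z]
    (x₀ : X) (y₀ : Y) (ρ η : ℝ) (hρ : 0 < ρ) (hη : 0 < η)
    (Φ : X → Y → Z) (DΦ : X → Y → (Y →L[ℝ] Z))
    -- Φ is continuous in x :
    (hΦcont : ∀ y ∈ ball y₀ η, ContinuousOn (fun x => Φ x y) (ball x₀ ρ))
    -- Φ is continuously differentiable in y :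
    (hΦdiff : ∀ x ∈ ball x₀ ρ, ∀ y ∈ ball y₀ η, HasFDerivAt (fun y' => Φ x y') (DΦ x y) y)
    (hDcont : ∀ x ∈ ball x₀ ρ, ContinuousOn (fun y => DΦ x y) (ball y₀ η))
    (hΦ₀ : Φ x₀ y₀ = 0)
    -- L₀ := DΦ x₀ y₀ has a bounded inverse L₀inv :
    (L₀inv : Z →L[ℝ] Y)
    (hinv_left : ∀ y : Y, L₀inv (DΦ x₀ y₀ y) = y)
    (hinv_right : ∀ z : Z, DΦ x₀ y₀ (L₀inv z) = z)
    -- condition (i) :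
    (hcond1 : ∀ x ∈ ball x₀ ρ, ∀ y ∈ ball y₀ η,
      ‖DΦ x₀ y₀ - DΦ x y‖ ≤ (1/3) * ‖L₀inv‖⁻¹)
    -- condition (ii) :
    (hcond2 : ∀ x ∈ ball x₀ ρ, ‖Φ x y₀‖ ≤ (η/3) * ‖L₀inv‖⁻¹) :
    ∃ yf : X → Y, ContinuousOn yf (ball x₀ ρ) ∧
      ∀ x ∈ ball x₀ ρ, yf x ∈ ball y₀ η ∧ Φ x (yf x) = 0 ∧
        ∀ y ∈ ball y₀ η, Φ x y = 0 → y = yf x := by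
  classical
  -- Degenerate case: `L₀inv = 0`, which forces `Y` to be trivial.
  by_cases hK0 : ‖L₀inv‖ = 0
  · have hL0 : L₀inv = 0 := by rwa [norm_eq_zero] at hK0
    have hYtriv : ∀ y : Y, y = 0 := by
      intro y
      have := hinv_left y
      rw [hL0] at this
      simpa using this.symm
    refine ⟨fun _ => y₀, continuousOn_const, fun x hx => ?_⟩
    have hΦ0 : Φ x y₀ = 0 := by
      have := hcond2 x hx
      rw [hK0] at this
      simp only [inv_zero, mul_zero] at this
      exact norm_le_zero_iff.mp this
    exact ⟨mem_ball_self hη, hΦ0, fun y _ _ => by rw [hYtriv y, hYtriv y₀]⟩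
  have hK : 0 < ‖L₀inv‖ := lt_of_le_of_ne (norm_nonneg _) (Ne.symm hK0)
  -- The fixed point map `g x y = y - L₀inv (Φ x y)`.
  set g : X → Y → Y := fun x y => y - L₀inv (Φ x y) with hg
  -- Lipschitz estimate for `g x` on `ball y₀ η`.
  have hlip : ∀ x ∈ ball x₀ ρ, ∀ y ∈ ball y₀ η, ∀ y' ∈ ball y₀ η,
      ‖g x y - g x y'‖ ≤ (1/3) * ‖y - y'‖ := by
    intro x hx y hy y' hy'
    have hderiv : ∀ w ∈ ball y₀ η, HasFDerivWithinAt (g x)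
        ((L₀inv.comp (DΦ x₀ y₀ - DΦ x w))) (ball y₀ η) w := by
      intro w hw
      have h1 : HasFDerivAt (g x)
          (ContinuousLinearMap.id ℝ Y - L₀inv.comp (DΦ x w)) w :=
        (hasFDerivAt_id w).sub ((L₀inv.hasFDerivAt.comp w (hΦdiff x hx w hw)))
      have heq : ContinuousLinearMap.id ℝ Y - L₀inv.comp (DΦ x w)
          = L₀inv.comp (DΦ x₀ y₀ - DΦ x w) := by
        ext v
        simp [hinv_left v]
      rw [heq] at h1
      exact h1.hasFDerivWithinAt
    have hbound : ∀ w ∈ ball y₀ η, ‖L₀inv.comp (DΦ x₀ y₀ - DΦ x w)‖ ≤ 1/3 := by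
      intro w hw
      calc ‖L₀inv.comp (DΦ x₀ y₀ - DΦ x w)‖ ≤ ‖L₀inv‖ * ‖DΦ x₀ y₀ - DΦ x w‖ :=
            L₀inv.opNorm_comp_le _
        _ ≤ ‖L₀inv‖ * ((1/3) * ‖L₀inv‖⁻¹) := by
            exact mul_le_mul_of_nonneg_left (hcond1 x hx w hw) (norm_nonneg _)
        _ = 1/3 := by field_simp
    exact (convex_ball y₀ η).norm_image_sub_le_of_norm_hasFDerivWithin_le hderiv hbound hy' hy
  -- `g x` maps the closed ball of radius `η/2` into itself.
  have hball_sub : closedBall y₀ (η/2) ⊆ ball y₀ η :=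
    closedBall_subset_ball (by linarith)
  have hgy₀ : ∀ x ∈ ball x₀ ρ, ‖g x y₀ - y₀‖ ≤ η/3 := by
    intro x hx
    have : ‖L₀inv (Φ x y₀)‖ ≤ ‖L₀inv‖ * ((η/3) * ‖L₀inv‖⁻¹) :=
      (L₀inv.le_opNorm _).trans (mul_le_mul_of_nonneg_left (hcond2 x hx) (norm_nonneg _))
    have h2 : ‖L₀inv (Φ x y₀)‖ ≤ η/3 := by
      calc ‖L₀inv (Φ x y₀)‖ ≤ ‖L₀inv‖ * ((η/3) * ‖L₀inv‖⁻¹) := this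
        _ = η/3 := by field_simp
    simpa [hg, norm_sub_rev, sub_sub_cancel_left] using h2
  have hmaps : ∀ x ∈ ball x₀ ρ, Set.MapsTo (g x) (closedBall y₀ (η/2)) (closedBall y₀ (η/2)) := by
    intro x hx y hy
    rw [mem_closedBall, dist_eq_norm]
    calc ‖g x y - y₀‖ ≤ ‖g x y - g x y₀‖ + ‖g x y₀ - y₀‖ := norm_sub_le_norm_sub_add_norm_sub _ _ _
      _ ≤ (1/3) * ‖y - y₀‖ + η/3 := by
          refine add_le_add (hlip x hx y (hball_sub hy) y₀ (mem_ball_self hη)) (hgy₀ x hx)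
      _ ≤ (1/3) * (η/2) + η/3 := by
          have : ‖y - y₀‖ ≤ η/2 := by rwa [mem_closedBall, dist_eq_norm] at hy
          nlinarith
      _ = η/2 := by ring
  -- Existence of fixed points by the contraction mapping principle.
  have hexists : ∀ x ∈ ball x₀ ρ, ∃ y ∈ closedBall y₀ (η/2), Function.IsFixedPt (g x) y := by
    intro x hx
    have hsc : IsComplete (closedBall y₀ (η/2)) := IsClosed.isComplete isClosed_closedBall
    have hcontr : ContractingWith (1/3 : NNReal)
        ((hmaps x hx).restrict (g x) (closedBall y₀ (η/2)) (closedBall y₀ (η/2))) := by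
      refine ⟨by rw [← NNReal.coe_lt_coe]; norm_num, ?_⟩
      refine (hmaps x hx).lipschitzOnWith_iff_restrict.mp ?_
      rw [lipschitzOnWith_iff_norm_sub_le]
      intro a ha b hb
      have := hlip x hx a (hball_sub ha) b (hball_sub hb)
      calc ‖g x a - g x b‖ ≤ (1/3) * ‖a - b‖ := this
        _ = ((1/3 : NNReal) : ℝ) * ‖a - b‖ := by norm_num
    obtain ⟨y, hyS, hfix, -⟩ := hcontr.exists_fixedPoint' hsc (hmaps x hx)
      (mem_closedBall_self (by linarith)) (edist_ne_top _ _)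
    exact ⟨y, hyS, hfix⟩
  choose! yf hyfS hyffix using hexists
  -- Fixed points of `g x` are zeros of `Φ x ·` and conversely.
  have hfix_iff : ∀ x y, Function.IsFixedPt (g x) y ↔ Φ x y = 0 := by
    intro x y
    constructor
    · intro h
      have h1 : L₀inv (Φ x y) = 0 := by
        have := h
        simp only [hg, Function.IsFixedPt, sub_eq_self] at this
        exact this
      have := hinv_right (Φ x y)
      rw [h1] at this
      simpa using this.symm
    · intro h
      simp [Function.IsFixedPt, hg, h]
  have hΦyf : ∀ x ∈ ball x₀ ρ, Φ x (yf x) = 0 := fun x hx => (hfix_iff x (yf x)).1 (hyffix x hx)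
  have hyfball : ∀ x ∈ ball x₀ ρ, yf x ∈ ball y₀ η := fun x hx => hball_sub (hyfS x hx)
  -- Uniqueness.
  have huniq : ∀ x ∈ ball x₀ ρ, ∀ y ∈ ball y₀ η, Φ x y = 0 → y = yf x := by
    intro x hx y hy hΦy
    have hfy : g x y = y := (hfix_iff x y).2 hΦy
    have hfyf : g x (yf x) = yf x := hyffix x hx
    have h := hlip x hx y hy (yf x) (hyfball x hx)
    rw [hfy, hfyf] at h
    have h0 : ‖y - yf x‖ ≤ 0 := by linarith
    have : y - yf x = 0 := norm_le_zero_iff.mp h0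
    exact sub_eq_zero.mp this
  -- Continuity of `yf`.
  have hcontyf : ContinuousOn yf (ball x₀ ρ) := by
    intro x' hx'
    have hest : ∀ x ∈ ball x₀ ρ, dist (yf x) (yf x') ≤ (3/2) * ‖L₀inv‖ * ‖Φ x (yf x')‖ := by
      intro x hx
      have h2 : ‖g x (yf x) - g x (yf x')‖ ≤ (1/3) * ‖yf x - yf x'‖ :=
        hlip x hx (yf x) (hyfball x hx) (yf x') (hyfball x' hx')
      have h3 : ‖g x (yf x') - yf x'‖ ≤ ‖L₀inv‖ * ‖Φ x (yf x')‖ := by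
        have : g x (yf x') - yf x' = -(L₀inv (Φ x (yf x'))) := by simp [hg]
        rw [this, norm_neg]
        exact L₀inv.le_opNorm _
      have h1 : ‖yf x - yf x'‖ ≤ ‖g x (yf x) - g x (yf x')‖ + ‖g x (yf x') - yf x'‖ := by
        calc ‖yf x - yf x'‖ = ‖g x (yf x) - yf x'‖ := by rw [hyffix x hx]
          _ ≤ ‖g x (yf x) - g x (yf x')‖ + ‖g x (yf x') - yf x'‖ :=
              norm_sub_le_norm_sub_add_norm_sub _ _ _
      rw [dist_eq_norm]
      nlinarith [norm_nonneg (Φ x (yf x'))]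
    have hΦc : ContinuousWithinAt (fun x => Φ x (yf x')) (ball x₀ ρ) x' :=
      (hΦcont (yf x') (hyfball x' hx')) x' hx'
    have hlim : Filter.Tendsto (fun x => (3/2) * ‖L₀inv‖ * ‖Φ x (yf x')‖)
        (nhdsWithin x' (ball x₀ ρ)) (nhds 0) := by
      have h4 : Filter.Tendsto (fun x => ‖Φ x (yf x')‖)
          (nhdsWithin x' (ball x₀ ρ)) (nhds ‖Φ x' (yf x')‖) := hΦc.norm
      rw [hΦyf x' hx', norm_zero] at h4
      simpa using h4.const_mul ((3/2) * ‖L₀inv‖)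
    rw [ContinuousWithinAt, tendsto_iff_dist_tendsto_zero]
    refine squeeze_zero' (Filter.Eventually.of_forall fun _ => dist_nonneg) ?_ hlim
    filter_upwards [self_mem_nhdsWithin] with x hx using hest x hx
  exact ⟨yf, hcontyf, fun x hx => ⟨hyfball x hx, hΦyf x hx, huniq x hx⟩⟩
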